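/- Let φ be a 3-CNF formula with n variables and m clauses in which every variable occurs both unnegated and negated, and let G(φ) be the graph constructed from φ (triangle gadgets X_i, X̄_i, Y_i for each variable; a clause vertex C_j adjacent to the three vertices for the negations of its literals; an extra vertex z adjacent to all 2n literal vertices). Then for every well-connected set M of G(φ) with 4 ≤ |M| ≤ |V(G(φ))| − 2, and for every index i, M does not contain both literal vertices X_i and X̄_i; consequently M contains at most two vertices of each triangle gadget {X_i, X̄_i, Y_i}. -/
import Mathlib


/-- A set `M` of vertices of `G` is *well-connected* if (i) any two distinct
vertices of `M` are joined by a path in `G` avoiding all other vertices of `M`,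
and (ii) the subgraph induced by the complement of `M` is connected
(the empty induced subgraph being regarded as connected). -/
def IsWCS {V : Type*} (G : SimpleGraph V) (M : Set V) : Prop :=
  (∀ u ∈ M, ∀ v ∈ M, u ≠ v →
    ∃ p : G.Walk u v, ∀ w ∈ p.support, w ∈ M → w = u ∨ w = v) ∧
  (G.induce Mᶜ).Preconnected

/-- Vertices of the graph `G(φ)` built from a 3-CNF formula `φ` with `n` variables and
`m` clauses: a literal vertex `lit i b` for each variable `i` and polarity `b`
(`lit i true` is `Xᵢ`, `lit i false` is `X̄ᵢ`), a gadget vertex `gad i = Yᵢ` for each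
variable, a clause vertex `cl j = Cⱼ` for each clause, and one extra vertex `z`. -/
inductive SatVtx (n m : ℕ) where
  | lit : Fin n → Bool → SatVtx n m
  | gad : Fin n → SatVtx n m
  | cl : Fin m → SatVtx n m
  | z : SatVtx n m
deriving DecidableEq

private def satVtxToSum {n m : ℕ} : SatVtx n m → (Fin n × Bool) ⊕ (Fin n ⊕ (Fin m ⊕ Unit))
  | .lit i b => .inl (i, b)
  | .gad i => .inr (.inl i)
  | .cl j => .inr (.inr (.inl j))
  | .z => .inr (.inr (.inr ()))

instance {n m : ℕ} : Finite (SatVtx n m) :=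
  Finite.of_injective satVtxToSum (by
    intro a b h
    cases a <;> cases b <;> simp [satVtxToSum] at h <;> simp_all)

/-- The adjacency-generating relation of `G(φ)`, where the 3-CNF formula is encoded
by `c : Fin m → Fin 3 → Fin n × Bool` giving the three literals of each clause
(`(i, b)` is the literal `xᵢ` if `b = true` and `x̄ᵢ` if `b = false`):
`Xᵢ, X̄ᵢ, Yᵢ` form a triangle; the clause vertex `Cⱼ` is adjacent exactly to the three
literal vertices corresponding to the negations of its literals; and `z` is adjacent
to all literal vertices. -/
def satRel {n m : ℕ} (c : Fin m → Fin 3 → Fin n × Bool) :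
    SatVtx n m → SatVtx n m → Prop
  | .lit i _, .lit i' _ => i = i'
  | .lit i _, .gad i' => i = i'
  | .gad i, .lit i' _ => i = i'
  | .lit i b, .cl j => ∃ k : Fin 3, c j k = (i, !b)
  | .cl j, .lit i b => ∃ k : Fin 3, c j k = (i, !b)
  | .lit _ _, .z => True
  | .z, .lit _ _ => True
  | _, _ => False

/-- The graph `G(φ)` constructed from the 3-CNF formula encoded by `c`. -/
def satGraph {n m : ℕ} (c : Fin m → Fin 3 → Fin n × Bool) : SimpleGraph (SatVtx n m) :=
  SimpleGraph.fromRel (satRel c)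


private lemma adj_gad {n m : ℕ} {c : Fin m → Fin 3 → Fin n × Bool} {i : Fin n}
    {v : SatVtx n m} (h : (satGraph c).Adj (SatVtx.gad i) v) :
    v = SatVtx.lit i true ∨ v = SatVtx.lit i false := by
  cases v with
  | lit i' b =>
    have hi : i = i' := by
      have := h.2
      rcases this with h' | h' <;> simpa [satRel, eq_comm] using h'
    subst hi
    cases b
    · right; rfl
    · left; rfl
  | gad i' => exact absurd h.2 (by simp [satRel])
  | cl j => exact absurd h.2 (by simp [satRel])
  | z => exact absurd h.2 (by simp [satRel])

/-- In the graph `G(φ)` built from a 3-CNF formula `φ` (in which every variable occurs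
both unnegated and negated), every well-connected set `M` with `4 ≤ |M| ≤ |V(G(φ))| - 2`
contains, for each variable `i`, at most one of the two literal vertices `Xᵢ, X̄ᵢ`;
consequently it contains at most two vertices of the triangle gadget `{Xᵢ, X̄ᵢ, Yᵢ}`. -/
theorem wcs_triangle_gadget {n m : ℕ} (c : Fin m → Fin 3 → Fin n × Bool)
    (hocc : ∀ (i : Fin n) (b : Bool), ∃ (j : Fin m) (k : Fin 3), c j k = (i, b))
    (M : Set (SatVtx n m)) (hM : IsWCS (satGraph c) M)
    (hlb : 4 ≤ Nat.card M) (hub : Nat.card M + 2 ≤ Nat.card (SatVtx n m))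
    (i : Fin n) :
    ¬ (SatVtx.lit i true ∈ M ∧ SatVtx.lit i false ∈ M) ∧
    Nat.card (M ∩ {SatVtx.lit i true, SatVtx.lit i false, SatVtx.gad i} : Set (SatVtx n m)) ≤ 2 := by
  classical
  obtain ⟨hpath, hconn⟩ := hM
  have key : ¬ (SatVtx.lit i true ∈ M ∧ SatVtx.lit i false ∈ M) := by
    rintro ⟨ht, hf⟩
    by_cases hg : SatVtx.gad i ∈ M
    · -- all three vertices of the gadget are in M
      have hM4 : 4 ≤ M.ncard := by rwa [Nat.card_coe_set_eq] at hlb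
      have hTcard : ({SatVtx.lit i true, SatVtx.lit i false, SatVtx.gad i} :
          Set (SatVtx n m)).ncard ≤ 3 := by
        refine (Set.ncard_insert_le _ _).trans ?_
        have := Set.ncard_insert_le (SatVtx.lit i false)
          ({SatVtx.gad i} : Set (SatVtx n m))
        simp only [Set.ncard_singleton] at this ⊢
        omega
      have hnsub : ¬ M ⊆ ({SatVtx.lit i true, SatVtx.lit i false, SatVtx.gad i} :
          Set (SatVtx n m)) := by
        intro hsub
        have := Set.ncard_le_ncard hsub (Set.toFinite _)
        omega
      obtain ⟨u, huM, huT⟩ := Set.not_subset.mp hnsub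
      simp only [Set.mem_insert_iff, Set.mem_singleton_iff, not_or] at huT
      obtain ⟨hu1, hu2, hu3⟩ := huT
      obtain ⟨p, hp⟩ := hpath u huM (SatVtx.gad i) hg hu3
      obtain ⟨w, hadj, p', hp'⟩ :=
        SimpleGraph.Walk.exists_eq_cons_of_ne (Ne.symm hu3) p.reverse
      have hw := adj_gad hadj
      have hwsup : w ∈ p.support := by
        have : w ∈ p.reverse.support := by rw [hp']; simp
        simpa using this
      have hwM : w ∈ M := by rcases hw with h | h <;> simp [h, ht, hf]
      rcases hp w hwsup hwM with h | h
      · rcases hw with h' | h' <;> simp_all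
      · rcases hw with h' | h' <;> simp [h'] at h
    · -- gad i ∉ M : it would be isolated in the complement
      have hcompl2 : 2 ≤ Mᶜ.ncard := by
        have h1 := Set.ncard_add_ncard_compl M
        have h2 : M.ncard = Nat.card M := (Nat.card_coe_set_eq M).symm
        omega
      have hnsub : ¬ Mᶜ ⊆ ({SatVtx.gad i} : Set (SatVtx n m)) := by
        intro hsub
        have := Set.ncard_le_ncard hsub (Set.toFinite _)
        simp only [Set.ncard_singleton] at this
        omega
      obtain ⟨v, hv, hvne⟩ := Set.not_subset.mp hnsub
      have hvne' : v ≠ SatVtx.gad i := by simpa using hvne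
      have hgc : SatVtx.gad i ∈ Mᶜ := hg
      obtain ⟨q⟩ := hconn ⟨SatVtx.gad i, hgc⟩ ⟨v, hv⟩
      have hne2 : (⟨SatVtx.gad i, hgc⟩ : ↥Mᶜ) ≠ ⟨v, hv⟩ := by
        simp [Subtype.ext_iff, eq_comm, hvne']
      obtain ⟨w, hadj, q', hq'⟩ := SimpleGraph.Walk.exists_eq_cons_of_ne hne2 q
      have hadjG : (satGraph c).Adj (SatVtx.gad i) w.val := hadj
      have hwM : w.val ∈ M := by
        rcases adj_gad hadjG with h | h <;> simp [h, ht, hf]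
      exact absurd hwM w.2
  refine ⟨key, ?_⟩
  rw [Nat.card_coe_set_eq]
  by_cases ht : SatVtx.lit i true ∈ M
  · have hf : SatVtx.lit i false ∉ M := fun h => key ⟨ht, h⟩
    have hsub : M ∩ ({SatVtx.lit i true, SatVtx.lit i false, SatVtx.gad i} :
        Set (SatVtx n m)) ⊆ ({SatVtx.lit i true, SatVtx.gad i} : Set (SatVtx n m)) := by
      rintro x ⟨hxM, hxT⟩
      simp only [Set.mem_insert_iff, Set.mem_singleton_iff] at hxT ⊢
      rcases hxT with rfl | rfl | rfl
      · left; rfl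
      · exact absurd hxM hf
      · right; rfl
    refine (Set.ncard_le_ncard hsub (Set.toFinite _)).trans ?_
    refine (Set.ncard_insert_le _ _).trans ?_
    simp [Set.ncard_singleton]
  · have hsub : M ∩ ({SatVtx.lit i true, SatVtx.lit i false, SatVtx.gad i} :
        Set (SatVtx n m)) ⊆ ({SatVtx.lit i false, SatVtx.gad i} : Set (SatVtx n m)) := by
      rintro x ⟨hxM, hxT⟩
      simp only [Set.mem_insert_iff, Set.mem_singleton_iff] at hxT ⊢
      rcases hxT with rfl | rfl | rfl
      · exact absurd hxM ht
      · left; rfl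
      · right; rfl
    refine (Set.ncard_le_ncard hsub (Set.toFinite _)).trans ?_
    refine (Set.ncard_insert_le _ _).trans ?_
    simp [Set.ncard_singleton]
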